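/- Let n ≥ 1, τ, o ∈ ℝⁿ, d_c > 0, ε > 0, k₁ > 0, α ∈ (0,1), and c > 0, and define B(x) = ‖x - τ‖² / (‖x - o‖ - d_c + 1/ε). Let x ∈ ℝⁿ with ‖x - o‖ > d_c be a point where B is differentiable and suppose ‖∇B(x)‖ ≥ c·‖x - τ‖. Then ⟨∇B(x), -k₁·∇B(x)·‖∇B(x)‖^(α-1)⟩ ≤ -K·B(x)^β, where β = (1+α)/2 and K = k₁·c^(1+α)/ε^β (with the left-hand side interpreted as 0 when ∇B(x) = 0, in which case x = τ and B(x) = 0). -/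

import Mathlib

/-- Lyapunov decrease estimate for the barrier-function controller
`u = -k₁·∇B·‖∇B‖^(α-1)`: if `‖∇B(x)‖ ≥ c‖x-τ‖` at a safe point `x`, then
`⟨∇B(x), u⟩ ≤ -K·B(x)^β` with `β = (1+α)/2` and `K = k₁·c^(1+α)/ε^β`. -/
theorem stmt_11 (n : ℕ) (hn : 1 ≤ n) (τ o : EuclideanSpace ℝ (Fin n))
    (dc ε k₁ α c : ℝ) (hdc : 0 < dc) (hε : 0 < ε) (hk₁ : 0 < k₁)
    (hα0 : 0 < α) (hα1 : α < 1) (hc : 0 < c)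
    (B : EuclideanSpace ℝ (Fin n) → ℝ)
    (hB : ∀ y, B y = ‖y - τ‖ ^ 2 / (‖y - o‖ - dc + 1 / ε))
    (x : EuclideanSpace ℝ (Fin n)) (hx : dc < ‖x - o‖)
    (hdiff : DifferentiableAt ℝ B x)
    (hgrad : c * ‖x - τ‖ ≤ ‖gradient B x‖) :
    (inner ℝ (gradient B x)
        ((-k₁ * ‖gradient B x‖ ^ (α - 1)) • gradient B x) : ℝ) ≤
      -(k₁ * c ^ (1 + α) / ε ^ ((1 + α) / 2)) * B x ^ ((1 + α) / 2) := by
  set g := gradient B x with hg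
  set β : ℝ := (1 + α) / 2 with hβ
  have hβpos : 0 < β := by positivity
  have hD : 0 < ‖x - o‖ - dc + 1 / ε := by
    have : 0 < ‖x - o‖ - dc := by linarith
    positivity
  have hBnn : 0 ≤ B x := by
    rw [hB]; positivity
  have hinner : (inner ℝ g ((-k₁ * ‖g‖ ^ (α - 1)) • g) : ℝ)
      = -k₁ * ‖g‖ ^ (α - 1) * ‖g‖ ^ 2 := by
    rw [real_inner_smul_right, real_inner_self_eq_norm_sq]
  rw [hinner]
  by_cases hg0 : g = 0
  · have hxτ : ‖x - τ‖ = 0 := by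
      rw [hg0] at hgrad
      simp at hgrad
      nlinarith [norm_nonneg (x - τ)]
    have hBx : B x = 0 := by rw [hB, hxτ]; simp
    rw [hBx, hg0, Real.zero_rpow (ne_of_gt hβpos)]
    simp
  · have hgpos : 0 < ‖g‖ := norm_pos_iff.mpr hg0
    have hpow : ‖g‖ ^ (α - 1) * ‖g‖ ^ 2 = ‖g‖ ^ (1 + α) := by
      rw [← Real.rpow_natCast ‖g‖ 2, ← Real.rpow_add hgpos]
      congr 1; ring
    have key : (k₁ * c ^ (1 + α) / ε ^ β) * B x ^ β ≤ k₁ * ‖g‖ ^ (1 + α) := by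
      have h1 : B x ≤ ε * ‖x - τ‖ ^ 2 := by
        rw [hB, div_le_iff₀ hD]
        have hεD : 1 ≤ ε * (‖x - o‖ - dc + 1 / ε) := by
          have : ε * (1/ε) = 1 := by field_simp
          nlinarith
        nlinarith [sq_nonneg ‖x - τ‖]
      have h2 : B x ^ β ≤ ε ^ β * ‖x - τ‖ ^ (1 + α) := by
        calc B x ^ β ≤ (ε * ‖x - τ‖ ^ 2) ^ β := Real.rpow_le_rpow hBnn h1 hβpos.le
          _ = ε ^ β * (‖x - τ‖ ^ 2) ^ β := Real.mul_rpow hε.le (by positivity)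
          _ = ε ^ β * ‖x - τ‖ ^ (1 + α) := by
              rw [← Real.rpow_natCast ‖x - τ‖ 2, ← Real.rpow_mul (norm_nonneg _)]
              congr 1
              rw [hβ]; push_cast; ring
      have h3 : c ^ (1 + α) * ‖x - τ‖ ^ (1 + α) ≤ ‖g‖ ^ (1 + α) := by
        rw [← Real.mul_rpow hc.le (norm_nonneg _)]
        exact Real.rpow_le_rpow (by positivity) hgrad (by positivity)
      have hεβ : 0 < ε ^ β := Real.rpow_pos_of_pos hε _
      calc (k₁ * c ^ (1 + α) / ε ^ β) * B x ^ β
          ≤ (k₁ * c ^ (1 + α) / ε ^ β) * (ε ^ β * ‖x - τ‖ ^ (1 + α)) := by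
            apply mul_le_mul_of_nonneg_left h2; positivity
        _ = k₁ * (c ^ (1 + α) * ‖x - τ‖ ^ (1 + α)) := by field_simp
        _ ≤ k₁ * ‖g‖ ^ (1 + α) := by nlinarith
    nlinarith [hpow]
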